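/- Under the same setup (columns xi with ‖xi‖₂² = λi ∈ (0,1], |⟨x̄i,x̄j⟩| ≤ ι for i≠j, λ1 ≥ … ≥ λn), if additionally λr > λ_{r+1} + 2nι for some index r, then the eigenvalues γ1 ≥ … ≥ γn of XᵀX split: γ1,…,γr ∈ [λr - nι, λ1 + nι] and γ_{r+1},…,γn ∈ [λn - nι, λ_{r+1} + nι], and these two intervals are disjoint. -/

import Mathlib

open Matrix Polynomial Finset

namespace Stmt4Aux



variable {N : ℕ}

lemma sum_smul_dot {ι' : Type*} [Fintype ι'] (g : ι' → ℝ) (u : ι' → (Fin N → ℝ))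
    (w : Fin N → ℝ) : (∑ i, g i • u i) ⬝ᵥ w = ∑ i, g i * (u i ⬝ᵥ w) := by
  simp only [dotProduct, Finset.sum_apply, Pi.smul_apply, smul_eq_mul,
    Finset.sum_mul, Finset.mul_sum, mul_assoc]
  exact Finset.sum_comm

lemma dot_sum_smul {ι' : Type*} [Fintype ι'] (g : ι' → ℝ) (u : ι' → (Fin N → ℝ))
    (w : Fin N → ℝ) : w ⬝ᵥ (∑ i, g i • u i) = ∑ i, g i * (w ⬝ᵥ u i) := by
  simp only [dotProduct, Finset.sum_apply, Pi.smul_apply, smul_eq_mul,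
    Finset.mul_sum]
  rw [Finset.sum_comm]
  congr 1; ext i; congr 1; ext j; ring

/-- dot product expansion for an orthonormal (w.r.t. dotProduct) family. -/
lemma dot_ortho_expand {ι' : Type*} [Fintype ι'] [DecidableEq ι'] (u : ι' → (Fin N → ℝ))
    (hu : ∀ i j, u i ⬝ᵥ u j = if i = j then 1 else 0) (g h : ι' → ℝ) :
    (∑ i, g i • u i) ⬝ᵥ (∑ j, h j • u j) = ∑ i, g i * h i := by
  rw [sum_smul_dot]
  have : ∀ i, u i ⬝ᵥ (∑ j, h j • u j) = h i := by
    intro i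
    rw [dot_sum_smul]
    simp only [hu, mul_ite, mul_one, mul_zero]
    simpa using Finset.sum_ite_eq' univ i (fun j => h j)
  simp [this]

lemma li_of_dot_ortho {ι' : Type*} [Fintype ι'] [DecidableEq ι'] (u : ι' → (Fin N → ℝ))
    (hu : ∀ i j, u i ⬝ᵥ u j = if i = j then 1 else 0) :
    LinearIndependent ℝ u := by
  rw [Fintype.linearIndependent_iff]
  intro g hg j
  have h0 : (∑ i, g i • u i) ⬝ᵥ (u j) = g j := by
    rw [sum_smul_dot]
    simp only [hu, mul_ite, mul_one, mul_zero]
    simpa using Finset.sum_ite_eq' univ j (fun i => g i)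
  rw [hg] at h0
  simpa [zero_dotProduct] using h0.symm

lemma finrank_span_ortho {ι' : Type*} [Fintype ι'] [DecidableEq ι'] (u : ι' → (Fin N → ℝ))
    (hu : ∀ i j, u i ⬝ᵥ u j = if i = j then 1 else 0) :
    Module.finrank ℝ (Submodule.span ℝ (Set.range u)) = Fintype.card ι' :=
  finrank_span_eq_card (li_of_dot_ortho u hu)

lemma exists_mem_inf (V W : Submodule ℝ (Fin N → ℝ))
    (h : N < Module.finrank ℝ V + Module.finrank ℝ W) :
    ∃ v : Fin N → ℝ, v ∈ V ∧ v ∈ W ∧ v ≠ 0 := by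
  have hfin : 0 < Module.finrank ℝ (V ⊓ W : Submodule ℝ (Fin N → ℝ)) := by
    have h1 := Submodule.finrank_sup_add_finrank_inf_eq V W
    have h2 : Module.finrank ℝ (V ⊔ W : Submodule ℝ (Fin N → ℝ)) ≤ N := by
      simpa using Submodule.finrank_le (V ⊔ W)
    omega
  have : Nontrivial (V ⊓ W : Submodule ℝ (Fin N → ℝ)) := Module.finrank_pos_iff.mp hfin
  obtain ⟨⟨v, hv⟩, hvne⟩ := exists_ne (0 : (V ⊓ W : Submodule ℝ (Fin N → ℝ)))
  exact ⟨v, hv.1, hv.2, fun h0 => hvne (Subtype.ext h0)⟩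




variable {N : ℕ}

/-- Quadratic form bound: diag entries `lam`, off-diag bounded by `ι`,
`v` supported on `S` where `a ≤ lam ≤ b`. -/
lemma quadform_bound (A : Matrix (Fin N) (Fin N) ℝ) (lam : Fin N → ℝ) (ι : ℝ) (hι : 0 ≤ ι)
    (hdiag : ∀ i, A i i = lam i) (hoff : ∀ i j, i ≠ j → |A i j| ≤ ι)
    (v : Fin N → ℝ) (S : Finset (Fin N)) (hsupp : ∀ j, j ∉ S → v j = 0)
    (a b : ℝ) (ha : ∀ j ∈ S, a ≤ lam j) (hb : ∀ j ∈ S, lam j ≤ b) :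
    (a - N * ι) * (∑ i, v i ^ 2) ≤ v ⬝ᵥ (A *ᵥ v) ∧
      v ⬝ᵥ (A *ᵥ v) ≤ (b + N * ι) * (∑ i, v i ^ 2) := by
  classical
  have hQ : v ⬝ᵥ (A *ᵥ v) = ∑ i, ∑ j, v i * A i j * v j := by
    simp [dotProduct, Matrix.mulVec, Finset.mul_sum, mul_assoc]
  have hsplit : ∀ i : Fin N, ∑ j, v i * A i j * v j
      = lam i * v i ^ 2 + ∑ j, (if i = j then 0 else v i * A i j * v j) := by
    intro i
    have : ∀ j : Fin N, v i * A i j * v j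
        = (if i = j then lam i * v i ^ 2 else 0) + (if i = j then 0 else v i * A i j * v j) := by
      intro j
      split_ifs with h
      · subst h; rw [hdiag]; ring
      · ring
    rw [Finset.sum_congr rfl (fun j _ => this j), Finset.sum_add_distrib,
      Finset.sum_ite_eq univ i (fun _ => lam i * v i ^ 2)]
    simp
  set E : ℝ := ∑ i, ∑ j, (if i = j then (0:ℝ) else v i * A i j * v j) with hE
  have hQ2 : v ⬝ᵥ (A *ᵥ v) = (∑ i, lam i * v i ^ 2) + E := by
    rw [hQ, Finset.sum_congr rfl (fun i _ => hsplit i), Finset.sum_add_distrib]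
  -- bound E
  have hEbound : |E| ≤ N * ι * ∑ i, v i ^ 2 := by
    have h1 : |E| ≤ ∑ i, ∑ j, ι * |v i| * |v j| := by
      refine (Finset.abs_sum_le_sum_abs _ _).trans (Finset.sum_le_sum fun i _ => ?_)
      refine (Finset.abs_sum_le_sum_abs _ _).trans (Finset.sum_le_sum fun j _ => ?_)
      split_ifs with h
      · rw [abs_zero]; positivity
      · rw [abs_mul, abs_mul]
        calc |v i| * |A i j| * |v j| ≤ |v i| * ι * |v j| :=
              mul_le_mul_of_nonneg_right
                (mul_le_mul_of_nonneg_left (hoff i j h) (abs_nonneg (v i))) (abs_nonneg (v j))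
          _ = ι * |v i| * |v j| := by ring
    have h2 : ∑ i, ∑ j, ι * |v i| * |v j| = ι * (∑ i, |v i|) ^ 2 := by
      rw [sq, Finset.sum_mul, Finset.mul_sum]
      congr 1; ext i
      rw [Finset.mul_sum, Finset.mul_sum]
      congr 1; ext j; ring
    have h3 : (∑ i, |v i|) ^ 2 ≤ N * ∑ i, v i ^ 2 := by
      have := sq_sum_le_card_mul_sum_sq (s := (univ : Finset (Fin N)))
        (f := fun i => |v i|)
      simpa [sq_abs] using this
    calc |E| ≤ ι * (∑ i, |v i|) ^ 2 := h2 ▸ h1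
      _ ≤ ι * (N * ∑ i, v i ^ 2) := by
          exact mul_le_mul_of_nonneg_left h3 hι
      _ = N * ι * ∑ i, v i ^ 2 := by ring
  -- bound diagonal part
  have hsum : ∑ i, lam i * v i ^ 2 = ∑ i ∈ S, lam i * v i ^ 2 := by
    refine (Finset.sum_subset (Finset.subset_univ S) ?_).symm
    intro i _ hi; rw [hsupp i hi]; ring
  have hsumsq : ∑ i, v i ^ 2 = ∑ i ∈ S, v i ^ 2 := by
    refine (Finset.sum_subset (Finset.subset_univ S) ?_).symm
    intro i _ hi; rw [hsupp i hi]; ring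
  have hDub : ∑ i, lam i * v i ^ 2 ≤ b * ∑ i, v i ^ 2 := by
    rw [hsum, hsumsq, Finset.mul_sum]
    exact Finset.sum_le_sum fun i hi =>
      mul_le_mul_of_nonneg_right (hb i hi) (sq_nonneg _)
  have hDlb : a * ∑ i, v i ^ 2 ≤ ∑ i, lam i * v i ^ 2 := by
    rw [hsum, hsumsq, Finset.mul_sum]
    exact Finset.sum_le_sum fun i hi =>
      mul_le_mul_of_nonneg_right (ha i hi) (sq_nonneg _)
  have habs := abs_le.mp hEbound
  constructor
  · rw [hQ2]; nlinarith [habs.1]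
  · rw [hQ2]; nlinarith [habs.2]

/-- charpoly is invariant under conjugation. -/
lemma charpoly_conj (U D V : Matrix (Fin N) (Fin N) ℝ) (hUV : U * V = 1) :
    (U * D * V).charpoly = D.charpoly := by
  classical
  let f : Matrix (Fin N) (Fin N) ℝ → Matrix (Fin N) (Fin N) ℝ[X] :=
    fun M => (C : ℝ →+* ℝ[X]).mapMatrix M
  have hf : ∀ M M' : Matrix (Fin N) (Fin N) ℝ, f (M * M') = f M * f M' := fun M M' =>
    map_mul (C : ℝ →+* ℝ[X]).mapMatrix M M'
  have hUV' : f U * f V = 1 := by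
    rw [← hf, hUV]; exact map_one (C : ℝ →+* ℝ[X]).mapMatrix
  have hcm : charmatrix (U * D * V) = f U * charmatrix D * f V := by
    rw [charmatrix, charmatrix, mul_sub, sub_mul]
    congr 1
    · rw [((Matrix.scalar_commute (X : ℝ[X]) (fun r' => Commute.all _ _) (f U)).symm).eq,
        mul_assoc, hUV', mul_one]
    · rw [← hf, ← hf]
  have hdet : (U * D * V).charpoly = (f U).det * D.charpoly * (f V).det := by
    rw [Matrix.charpoly, hcm, Matrix.det_mul, Matrix.det_mul, Matrix.charpoly]
  have : (f U).det * (f V).det = 1 := by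
    rw [← Matrix.det_mul, hUV', Matrix.det_one]
  rw [hdet]
  calc (f U).det * D.charpoly * (f V).det = ((f U).det * (f V).det) * D.charpoly := by ring
    _ = D.charpoly := by rw [this, one_mul]




variable {N : ℕ}

lemma eig_dot_ortho {A : Matrix (Fin N) (Fin N) ℝ} (hA : A.IsHermitian) (i j : Fin N) :
    (⇑(hA.eigenvectorBasis i) : Fin N → ℝ) ⬝ᵥ ⇑(hA.eigenvectorBasis j)
      = if i = j then 1 else 0 := by
  have h := hA.eigenvectorBasis.orthonormal
  rw [orthonormal_iff_ite] at h
  have h2 := h i j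
  rw [EuclideanSpace.inner_eq_star_dotProduct] at h2
  rw [dotProduct_comm]
  simpa using h2

lemma eig_multiset {A : Matrix (Fin N) (Fin N) ℝ} (hA : A.IsHermitian) (γ : Fin N → ℝ)
    (hchar : A.charpoly = ∏ i, (X - C (γ i))) :
    Multiset.map γ Finset.univ.val = Multiset.map hA.eigenvalues Finset.univ.val := by
  classical
  have hU1 : (hA.eigenvectorUnitary : Matrix (Fin N) (Fin N) ℝ)
      * (star (hA.eigenvectorUnitary : Matrix (Fin N) (Fin N) ℝ)) = 1 :=
    Unitary.coe_mul_star_self hA.eigenvectorUnitary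
  have hAeq := hA.spectral_theorem
  have hdiag : (Matrix.diagonal (RCLike.ofReal ∘ hA.eigenvalues) :
      Matrix (Fin N) (Fin N) ℝ) = Matrix.diagonal hA.eigenvalues := by
    rw [RCLike.ofReal_real_eq_id, Function.id_comp]
  have hch2 : A.charpoly = (Matrix.diagonal hA.eigenvalues).charpoly := by
    conv_lhs => rw [hAeq]
    rw [hdiag]
    exact charpoly_conj _ _ _ hU1
  have hch3 : (Matrix.diagonal hA.eigenvalues).charpoly
      = ∏ i, (X - C (hA.eigenvalues i)) := by
    rw [Matrix.charpoly_of_upperTriangular _ (Matrix.blockTriangular_diagonal _)]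
    simp
  have hprod : ∏ i, (X - C (γ i)) = ∏ i, (X - C (hA.eigenvalues i)) := by
    rw [← hchar, hch2, hch3]
  have hml : (Multiset.map (fun a => X - C a) (Multiset.map γ Finset.univ.val)).prod
      = (Multiset.map (fun a => X - C a) (Multiset.map hA.eigenvalues Finset.univ.val)).prod := by
    rw [Multiset.map_map, Multiset.map_map]
    exact hprod
  have := congrArg Polynomial.roots hml
  rwa [Polynomial.roots_multiset_prod_X_sub_C, Polynomial.roots_multiset_prod_X_sub_C] at this

lemma count_eq {γ μ : Fin N → ℝ}
    (hms : Multiset.map γ Finset.univ.val = Multiset.map μ Finset.univ.val)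
    (p : ℝ → Prop) [DecidablePred p] :
    (Finset.univ.filter fun i => p (γ i)).card = (Finset.univ.filter fun i => p (μ i)).card := by
  have h1 := congrArg (Multiset.countP p) hms
  rw [Multiset.countP_map, Multiset.countP_map] at h1
  exact h1



lemma exists_common {N : ℕ} (w z : Fin N → (Fin N → ℝ))
    (hw : ∀ i j, w i ⬝ᵥ w j = if i = j then 1 else 0)
    (hz : ∀ i j, z i ⬝ᵥ z j = if i = j then 1 else 0)
    (S T : Finset (Fin N)) (hcard : N < S.card + T.card) :
    ∃ (g : {a // a ∈ S} → ℝ) (h : {a // a ∈ T} → ℝ),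
      (∑ i, g i • w ↑i) = (∑ i, h i • z ↑i) ∧ (∑ i, h i • z ↑i) ≠ 0 := by
  classical
  have hwS : ∀ (i j : {a // a ∈ S}),
      (w ↑i) ⬝ᵥ (w ↑j) = if i = j then 1 else 0 := fun i j => by
    rw [hw]; exact if_congr Subtype.coe_inj rfl rfl
  have hzT : ∀ (i j : {a // a ∈ T}),
      (z ↑i) ⬝ᵥ (z ↑j) = if i = j then 1 else 0 := fun i j => by
    rw [hz]; exact if_congr Subtype.coe_inj rfl rfl
  obtain ⟨v, hvV, hvW, hne⟩ := exists_mem_inf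
    (Submodule.span ℝ (Set.range fun i : {a // a ∈ S} => w ↑i))
    (Submodule.span ℝ (Set.range fun i : {a // a ∈ T} => z ↑i))
    (by
      rw [finrank_span_ortho _ hwS, finrank_span_ortho _ hzT,
        Fintype.card_coe, Fintype.card_coe]
      exact hcard)
  obtain ⟨g, hg⟩ := (Submodule.mem_span_range_iff_exists_fun ℝ).mp hvV
  obtain ⟨h, hh⟩ := (Submodule.mem_span_range_iff_exists_fun ℝ).mp hvW
  exact ⟨g, h, by rw [hg, hh], by rw [hh]; exact hne⟩


end Stmt4Aux

set_option maxHeartbeats 1000000 in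
open Matrix Polynomial Finset Stmt4Aux in
/-- Gershgorin with a spectral gap: with columns as before, if
`λ_r > λ_{r+1} + 2(n+1)ι`, then the decreasingly sorted eigenvalues
`γ₀ ≥ … ≥ γₙ` of `XᵀX` (enumerated with multiplicity via the characteristic
polynomial) split: `γ₀,…,γ_r ∈ [λ_r - (n+1)ι, λ₀ + (n+1)ι]` and
`γ_{r+1},…,γₙ ∈ [λₙ - (n+1)ι, λ_{r+1} + (n+1)ι]`, two disjoint intervals.
(Here there are `n+1` data points.) -/
theorem stmt_4 (d n : ℕ) (ι : ℝ) (hι : 0 ≤ ι) (X : Matrix (Fin d) (Fin (n + 1)) ℝ)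
    (x : Fin (n + 1) → EuclideanSpace ℝ (Fin d))
    (hx : ∀ j i, x j i = X i j)
    (lam : Fin (n + 1) → ℝ) (hlam : ∀ j, lam j = ‖x j‖ ^ 2)
    (hsort : Antitone lam)
    (hpos : ∀ j, 0 < lam j) (hle1 : ∀ j, lam j ≤ 1)
    (hortho : ∀ i j, i ≠ j →
      abs ((inner ℝ (‖x i‖⁻¹ • x i) (‖x j‖⁻¹ • x j) : ℝ)) ≤ ι)
    (r : Fin n)
    (hgap : lam r.succ + 2 * (n + 1) * ι < lam r.castSucc)
    (γ : Fin (n + 1) → ℝ) (hγsort : Antitone γ)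
    (hchar : (X.transpose * X).charpoly =
      ∏ i : Fin (n + 1), (Polynomial.X - Polynomial.C (γ i))) :
    (∀ i : Fin (n + 1), i ≤ r.castSucc →
      γ i ∈ Set.Icc (lam r.castSucc - (n + 1) * ι) (lam 0 + (n + 1) * ι)) ∧
    (∀ i : Fin (n + 1), r.castSucc < i →
      γ i ∈ Set.Icc (lam (Fin.last n) - (n + 1) * ι) (lam r.succ + (n + 1) * ι)) ∧
    lam r.succ + (n + 1) * ι < lam r.castSucc - (n + 1) * ι := by
  classical
  set A := X.transpose * X with hAdef
  have hA : A.IsHermitian := by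
    have hXt : X.transpose = X.conjTranspose := by
      ext i j; simp [Matrix.conjTranspose_apply]
    rw [hAdef, hXt]
    exact Matrix.isHermitian_conjTranspose_mul_self X
  -- entries of A
  have hinner : ∀ i j, (inner ℝ (x i) (x j) : ℝ) = A i j := by
    intro i j
    simp only [hAdef, Matrix.mul_apply, Matrix.transpose_apply, PiLp.inner_apply,
      RCLike.inner_apply, starRingEnd_apply, star_trivial, hx]
    exact Finset.sum_congr rfl fun k _ => mul_comm _ _
  have hdiagA : ∀ j, A j j = lam j := by
    intro j
    rw [hlam, ← real_inner_self_eq_norm_sq, hinner]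
  have hnorm_pos : ∀ j, 0 < ‖x j‖ := by
    intro j
    rcases (norm_nonneg (x j)).lt_or_eq with h | h
    · exact h
    · exfalso; have := hpos j; rw [hlam, ← h] at this; simp at this
  have hnorm_le1 : ∀ j, ‖x j‖ ≤ 1 := by
    intro j
    have h1 := hle1 j
    rw [hlam] at h1
    nlinarith [norm_nonneg (x j)]
  have hoffA : ∀ i j, i ≠ j → |A i j| ≤ ι := by
    intro i j hij
    have h := hortho i j hij
    rw [inner_smul_left, inner_smul_right] at h
    have hi := hnorm_pos i
    have hj := hnorm_pos j
    rw [← hinner]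
    set t : ℝ := inner ℝ (x i) (x j) with ht
    have h' : ‖x i‖⁻¹ * (‖x j‖⁻¹ * |t|) ≤ ι := by
      have : |(starRingEnd ℝ) ‖x i‖⁻¹ * (‖x j‖⁻¹ * t)|
          = ‖x i‖⁻¹ * (‖x j‖⁻¹ * |t|) := by
        rw [map_inv₀, RCLike.conj_to_real, abs_mul, abs_mul, abs_inv, abs_inv,
          abs_of_pos hi, abs_of_pos hj]
      rwa [this] at h
    have key : |t| = ‖x i‖ * ‖x j‖ * (‖x i‖⁻¹ * (‖x j‖⁻¹ * |t|)) := by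
      field_simp
    rw [key]
    calc ‖x i‖ * ‖x j‖ * (‖x i‖⁻¹ * (‖x j‖⁻¹ * |t|)) ≤ ‖x i‖ * ‖x j‖ * ι := by
          apply mul_le_mul_of_nonneg_left h'
          positivity
      _ ≤ ι := by
          have hab : ‖x i‖ * ‖x j‖ ≤ 1 := by nlinarith [hnorm_le1 i, hnorm_le1 j, hi, hj]
          nlinarith [hab, hι]
  -- eigen data
  set μ : Fin (n + 1) → ℝ := hA.eigenvalues with hμdef
  have hms : Multiset.map γ Finset.univ.val = Multiset.map μ Finset.univ.val :=
    eig_multiset hA γ hchar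
  set u : Fin (n + 1) → (Fin (n + 1) → ℝ) := fun i => ⇑(hA.eigenvectorBasis i) with hudef
  have hu_ortho : ∀ i j, u i ⬝ᵥ u j = if i = j then 1 else 0 := fun i j =>
    eig_dot_ortho hA i j
  have hu_eig : ∀ i, A *ᵥ u i = μ i • u i := fun i => hA.mulVec_eigenvectorBasis i
  set e : Fin (n + 1) → (Fin (n + 1) → ℝ) := fun i => Pi.single i 1 with hedef
  have he_ortho : ∀ i j, e i ⬝ᵥ e j = if i = j then 1 else 0 := by
    intro i j
    simp [hedef, single_dotProduct, Pi.single_apply, eq_comm]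
  -- abbreviations
  set c : ℝ := lam r.castSucc - ((n : ℝ) + 1) * ι with hcdef
  set θ : ℝ := lam r.succ + ((n : ℝ) + 1) * ι with hθdef
  have hιN : (0:ℝ) ≤ ((n : ℝ) + 1) * ι := by positivity
  -- generic eigen-side computations
  have eigen_dot : ∀ (T : Finset (Fin (n+1))) (h : {a // a ∈ T} → ℝ),
      (∑ i, h i • u ↑i) ⬝ᵥ (A *ᵥ (∑ i, h i • u ↑i)) = ∑ i, h i * (h i * μ ↑i) ∧
      (∑ i, h i • u ↑i) ⬝ᵥ (∑ i, h i • u ↑i) = ∑ i, h i * h i := by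
    intro T h
    have hzT : ∀ (i j : {a // a ∈ T}),
        (u ↑i) ⬝ᵥ (u ↑j) = if i = j then 1 else 0 := fun i j => by
      rw [hu_ortho]; exact if_congr Subtype.coe_inj rfl rfl
    have hAv : A *ᵥ (∑ i, h i • u ↑i) = ∑ i, (h i * μ ↑i) • u ↑i := by
      rw [← Matrix.mulVecLin_apply, map_sum]
      refine Finset.sum_congr rfl fun i _ => ?_
      rw [_root_.map_smul, Matrix.mulVecLin_apply, hu_eig, smul_smul]
    constructor
    · rw [hAv]
      exact dot_ortho_expand (fun i : {a // a ∈ T} => u ↑i) hzT h (fun i => h i * μ ↑i)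
    · exact dot_ortho_expand (fun i : {a // a ∈ T} => u ↑i) hzT h h
  -- support of e-side combinations
  have esupp : ∀ (S : Finset (Fin (n+1))) (g : {a // a ∈ S} → ℝ) (j : Fin (n+1)),
      j ∉ S → (∑ i, g i • e ↑i) j = 0 := by
    intro S g j hj
    simp only [Finset.sum_apply, Pi.smul_apply, smul_eq_mul]
    refine Finset.sum_eq_zero fun i _ => ?_
    have hne : j ≠ (i : Fin (n+1)) := fun hh => hj (hh ▸ i.2)
    simp [hedef, Pi.single_apply, hne]
  have hvvsum : ∀ v : Fin (n+1) → ℝ, (∑ i, v i ^ 2) = v ⬝ᵥ v := by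
    intro v; simp [dotProduct, pow_two]
  -- Claim 1 : at least r+1 eigenvalues ≥ c
  have claim1 : (r : ℕ) + 1 ≤ #(univ.filter fun i => c ≤ μ i) := by
    by_contra hcon
    push_neg at hcon
    set T : Finset (Fin (n+1)) := univ.filter fun i => ¬ c ≤ μ i with hTdef
    have hTcard : #(univ.filter fun i => c ≤ μ i) + #T = n + 1 := by
      rw [hTdef, Finset.card_filter_add_card_filter_not, Finset.card_univ,
        Fintype.card_fin]
    set S : Finset (Fin (n+1)) := Finset.Iic r.castSucc with hSdef
    have hScard : #S = (r : ℕ) + 1 := by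
      rw [hSdef, Fin.card_Iic, Fin.coe_castSucc]
    have hcard : n + 1 < #S + #T := by omega
    obtain ⟨g, h, heq, hne⟩ := exists_common e u he_ortho hu_ortho S T hcard
    have hsupp : ∀ j, j ∉ S → (∑ i, h i • u ↑i) j = 0 := by
      intro j hj; rw [← heq]; exact esupp S g j hj
    have hquad := quadform_bound A lam ι hι hdiagA hoffA (∑ i, h i • u ↑i) S hsupp
      (lam r.castSucc) (lam 0)
      (fun j hj => hsort (Finset.mem_Iic.mp hj))
      (fun j _ => hsort (Fin.zero_le j))
    obtain ⟨hQeq, hVVeq⟩ := eigen_dot T h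
    have hvv : (∑ j, (∑ i, h i • u ↑i) j ^ 2) = ∑ i, h i * h i := by
      rw [hvvsum]; exact hVVeq
    -- some coefficient is nonzero
    have hexh : ∃ i0 : {a // a ∈ T}, h i0 ≠ 0 := by
      by_contra hallz
      push_neg at hallz
      apply hne
      exact Finset.sum_eq_zero fun i _ => by rw [hallz i, zero_smul]
    obtain ⟨i0, hi0⟩ := hexh
    have hstrict : ∑ i, h i * (h i * μ ↑i) < c * ∑ i, h i * h i := by
      rw [Finset.mul_sum]
      refine Finset.sum_lt_sum (fun i _ => ?_) ⟨i0, Finset.mem_univ _, ?_⟩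
      · have hμi : μ ↑i < c := lt_of_not_ge (Finset.mem_filter.mp i.2).2
        nlinarith [mul_self_nonneg (h i)]
      · have hμi : μ ↑i0 < c := lt_of_not_ge (Finset.mem_filter.mp i0.2).2
        nlinarith [mul_self_pos.mpr hi0]
    have hlow := hquad.1
    rw [hQeq, hvv] at hlow
    push_cast at hlow
    rw [hcdef] at hstrict
    linarith [hlow, hstrict]
  -- Claim 2 : at most r+1 eigenvalues > θ
  have claim2 : #(univ.filter fun i => θ < μ i) ≤ (r : ℕ) + 1 := by
    by_contra hcon
    push_neg at hcon
    set T : Finset (Fin (n+1)) := univ.filter fun i => θ < μ i with hTdef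
    set S : Finset (Fin (n+1)) := (Finset.Iic r.castSucc)ᶜ with hSdef
    have hScard : #S = n + 1 - ((r : ℕ) + 1) := by
      rw [hSdef, Finset.card_compl, Fin.card_Iic, Fin.coe_castSucc, Fintype.card_fin]
    have hrn : (r : ℕ) < n := r.isLt
    have hTle : #T ≤ n + 1 := by
      calc #T ≤ #(univ : Finset (Fin (n+1))) := Finset.card_le_card (Finset.subset_univ _)
        _ = n + 1 := by rw [Finset.card_univ, Fintype.card_fin]
    have hcard : n + 1 < #S + #T := by omega
    obtain ⟨g, h, heq, hne⟩ := exists_common e u he_ortho hu_ortho S T hcard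
    have hsupp : ∀ j, j ∉ S → (∑ i, h i • u ↑i) j = 0 := by
      intro j hj; rw [← heq]; exact esupp S g j hj
    have hSub : ∀ j ∈ S, lam j ≤ lam r.succ := by
      intro j hj
      rw [hSdef, Finset.mem_compl, Finset.mem_Iic] at hj
      apply hsort
      have hj' : r.castSucc < j := lt_of_not_ge hj
      rw [Fin.lt_def, Fin.coe_castSucc] at hj'
      rw [Fin.le_def, Fin.val_succ]
      omega
    have hquad := quadform_bound A lam ι hι hdiagA hoffA (∑ i, h i • u ↑i) S hsupp
      (lam (Fin.last n)) (lam r.succ)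
      (fun j _ => hsort (Fin.le_last j)) hSub
    obtain ⟨hQeq, hVVeq⟩ := eigen_dot T h
    have hvv : (∑ j, (∑ i, h i • u ↑i) j ^ 2) = ∑ i, h i * h i := by
      rw [hvvsum]; exact hVVeq
    have hexh : ∃ i0 : {a // a ∈ T}, h i0 ≠ 0 := by
      by_contra hallz
      push_neg at hallz
      apply hne
      exact Finset.sum_eq_zero fun i _ => by rw [hallz i, zero_smul]
    obtain ⟨i0, hi0⟩ := hexh
    have hstrict : θ * ∑ i, h i * h i < ∑ i, h i * (h i * μ ↑i) := by
      rw [Finset.mul_sum]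
      refine Finset.sum_lt_sum (fun i _ => ?_) ⟨i0, Finset.mem_univ _, ?_⟩
      · have hμi : θ < μ ↑i := (Finset.mem_filter.mp i.2).2
        nlinarith [mul_self_nonneg (h i)]
      · have hμi : θ < μ ↑i0 := (Finset.mem_filter.mp i0.2).2
        nlinarith [mul_self_pos.mpr hi0]
    have hup := hquad.2
    rw [hQeq, hvv] at hup
    push_cast at hup
    rw [hθdef] at hstrict
    linarith [hup, hstrict]
  -- global bounds for each γ i
  have hglob : ∀ i, lam (Fin.last n) - ((n : ℝ) + 1) * ι ≤ γ i ∧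
      γ i ≤ lam 0 + ((n : ℝ) + 1) * ι := by
    intro i
    have hmem : γ i ∈ Multiset.map μ Finset.univ.val := by
      rw [← hms]
      exact Multiset.mem_map_of_mem γ (Finset.mem_univ_val i)
    obtain ⟨j, _, hj⟩ := Multiset.mem_map.mp hmem
    have hsupp : ∀ k, k ∉ (univ : Finset (Fin (n+1))) → u j k = 0 :=
      fun k hk => absurd (Finset.mem_univ k) hk
    have hquad := quadform_bound A lam ι hι hdiagA hoffA (u j) univ hsupp
      (lam (Fin.last n)) (lam 0)
      (fun k _ => hsort (Fin.le_last k)) (fun k _ => hsort (Fin.zero_le k))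
    have hQ : (u j) ⬝ᵥ (A *ᵥ u j) = μ j := by
      rw [hu_eig j, dotProduct_smul, hu_ortho j j]
      simp
    have hsum1 : (∑ k, u j k ^ 2) = 1 := by
      rw [hvvsum, hu_ortho j j]; simp
    rw [hQ, hsum1] at hquad
    push_cast at hquad
    rw [← hj]
    constructor <;> [linarith [hquad.1]; linarith [hquad.2]]
  -- transfer counts to γ
  have hcnt1 : (r : ℕ) + 1 ≤ #(univ.filter fun i => c ≤ γ i) := by
    rw [count_eq hms (fun a => c ≤ a)]
    exact claim1
  have hcnt2 : #(univ.filter fun i => θ < γ i) ≤ (r : ℕ) + 1 := by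
    rw [count_eq hms (fun a => θ < a)]
    exact claim2
  -- sorted conclusions
  have htop : ∀ i : Fin (n+1), i ≤ r.castSucc → c ≤ γ i := by
    intro i hi
    by_contra hlt
    push_neg at hlt
    have hsub : (univ.filter fun j => c ≤ γ j) ⊆ Finset.Iio i := by
      intro j hj
      rw [Finset.mem_filter] at hj
      rw [Finset.mem_Iio]
      by_contra hji
      push_neg at hji
      exact absurd hj.2 (by linarith [hγsort hji])
    have hcard := Finset.card_le_card hsub
    rw [Fin.card_Iio] at hcard
    have hival : (i : ℕ) ≤ (r : ℕ) := by
      rw [Fin.le_def, Fin.coe_castSucc] at hi; exact hi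
    omega
  have hbot : ∀ i : Fin (n+1), r.castSucc < i → γ i ≤ θ := by
    intro i hi
    by_contra hlt
    push_neg at hlt
    have hsub : Finset.Iic i ⊆ (univ.filter fun j => θ < γ j) := by
      intro j hj
      rw [Finset.mem_Iic] at hj
      rw [Finset.mem_filter]
      exact ⟨Finset.mem_univ _, by linarith [hγsort hj]⟩
    have hcard := Finset.card_le_card hsub
    rw [Fin.card_Iic] at hcard
    have hival : (r : ℕ) + 1 ≤ (i : ℕ) := by
      rw [Fin.lt_def, Fin.coe_castSucc] at hi; omega
    omega
  refine ⟨?_, ?_, ?_⟩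
  · intro i hi
    constructor
    · exact htop i hi
    · exact (hglob i).2
  · intro i hi
    constructor
    · exact (hglob i).1
    · exact hbot i hi
  · have : θ < c := by rw [hθdef, hcdef]; push_cast at hgap ⊢; linarith
    rw [hθdef, hcdef] at this
    push_cast
    linarith
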